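/- For every positive integer n, the Zimin type ZFib[n] of the prefix of length n of the infinite Fibonacci word equals ψ(n), where ψ(n) is the unique k ≥ 1 such that the Fibonacci representation w of n factors as w = 1·x_1⋯x_{k-1}·z with each x_i ∈ {00, 001, 01} and z empty or equal to 0. -/

import Mathlib

open List Filter

/-- The Zimin pattern `Z_k` as a word over variables `0, 1, ..., k-1`
(`Z_0` is empty, `Z_{k+1} = Z_k · x_{k+1} · Z_k`). -/
def ziminWord : ℕ → List ℕ
  | 0 => []
  | k + 1 => ziminWord k ++ k :: ziminWord k

/-- `w` is the image of the Zimin pattern `Z_k` under a non-erasing morphism. -/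
def IsZiminImage {α : Type*} (k : ℕ) (w : List α) : Prop :=
  ∃ h : ℕ → List α, (∀ i, h i ≠ []) ∧ w = (ziminWord k).flatMap h

/-- The Zimin type of `w`: the maximum `k` such that `w` is an image of `Z_k`
under a non-erasing morphism (0 for the empty word). -/
noncomputable def ziminType {α : Type*} (w : List α) : ℕ :=
  sSup {k | IsZiminImage k w}

/-- The Zimin pattern `Z_k` embeds in `w`: some factor of `w` is an image of `Z_k`. -/
def ziminEmbeds {α : Type*} (k : ℕ) (w : List α) : Prop :=
  ∃ u : List α, u <:+: w ∧ IsZiminImage k u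

/-- Length of the longest border (proper prefix that is also a proper suffix) of `w`. -/
noncomputable def bordLen {α : Type*} (w : List α) : ℕ :=
  sSup {j | w.take j <:+ w ∧ j < w.length}

/-- Length of the longest short border (border of length `< |w|/2`) of `w`. -/
noncomputable def shortBordLen {α : Type*} (w : List α) : ℕ :=
  sSup {j | w.take j <:+ w ∧ 2 * j < w.length}

/-- The longest border of `w`. -/
noncomputable def bord {α : Type*} (w : List α) : List α := w.take (bordLen w)

/-- The longest short border of `w`. -/
noncomputable def shortBord {α : Type*} (w : List α) : List α := w.take (shortBordLen w)

/-- The Fibonacci words over `Bool` (`a = false`, `b = true`), with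
`fibWord 0 = F_0 = a`, `fibWord 1 = F_1 = F_0 F_{-1} = ab`, `F_{n} = F_{n-1} F_{n-2}`. -/
def fibWord : ℕ → List Bool
  | 0 => [false]
  | 1 => [false, true]
  | n + 2 => fibWord (n + 1) ++ fibWord n

/-- The Fibonacci numbers `Φ_n = |F_n|` (`Φ_0 = 1, Φ_1 = 2, Φ_2 = 3, ...`). -/
def Phi (n : ℕ) : ℕ := (fibWord n).length

/-- The infinite Fibonacci word `F_∞` (0-indexed letters). -/
def fibInf (i : ℕ) : Bool := (fibWord (i + 2)).getD i false

/-- The prefix `F_∞[1..n]` of the infinite Fibonacci word. -/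
def fibPrefix (n : ℕ) : List Bool := (List.range n).map fibInf


/-- The value `(w)_Fib` of a binary word in the Fibonacci numeration system
(most significant digit first; the last digit has weight `Φ_0`). -/
def fibVal : List Bool → ℕ
  | [] => 0
  | d :: rest => (if d then Phi rest.length else 0) + fibVal rest

/-- `w` is the Fibonacci representation of `n`: it starts with `1`, has no two
adjacent `1`s, and `(w)_Fib = n`. -/
def IsFibRep (n : ℕ) (w : List Bool) : Prop :=
  w.head? = some true ∧ w.Chain' (fun a b => ¬(a = true ∧ b = true)) ∧ fibVal w = n


section ZiminTheory
set_option linter.unusedSectionVars false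
variable {α : Type*} [Inhabited α]

lemma ziminWord_lt : ∀ k, ∀ i ∈ ziminWord k, i < k := by
  intro k
  induction k with
  | zero => simp [ziminWord]
  | succ k ih =>
    intro i hi
    simp only [ziminWord, List.mem_append, List.mem_cons] at hi
    rcases hi with h | h | h
    · exact (ih i h).trans (Nat.lt_succ_self k)
    · omega
    · exact (ih i h).trans (Nat.lt_succ_self k)

lemma length_flatMap_ge (l : List ℕ) (h : ℕ → List α) (hh : ∀ i, h i ≠ []) :
    l.length ≤ (l.flatMap h).length := by
  induction l with
  | nil => simp
  | cons a l ih =>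
    simp only [List.flatMap_cons, List.length_append, List.length_cons]
    have : 1 ≤ (h a).length := List.length_pos_iff.mpr (hh a)
    omega

lemma length_ziminWord_ge : ∀ k, k ≤ (ziminWord k).length := by
  intro k
  induction k with
  | zero => simp
  | succ k ih => simp only [ziminWord, List.length_append, List.length_cons]; omega

lemma IsZiminImage.length_le {k : ℕ} {w : List α} (h : IsZiminImage k w) : k ≤ w.length := by
  obtain ⟨f, hf, rfl⟩ := h
  exact (length_ziminWord_ge k).trans (length_flatMap_ge _ _ hf)

lemma isZiminImage_zero_iff {w : List α} : IsZiminImage 0 w ↔ w = [] := by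
  constructor
  · rintro ⟨f, hf, rfl⟩; simp [ziminWord]
  · rintro rfl; exact ⟨fun _ => [default], by simp, by simp [ziminWord]⟩

lemma isZiminImage_one {w : List α} (h : w ≠ []) : IsZiminImage 1 w :=
  ⟨fun _ => w, fun _ => h, by simp [ziminWord]⟩

lemma ziminSet_bdd (w : List α) : BddAbove {k | IsZiminImage k w} :=
  ⟨w.length, fun _ hk => hk.length_le⟩

lemma ziminSet_nonempty (w : List α) : {k | IsZiminImage k w}.Nonempty := by
  rcases eq_or_ne w [] with rfl | h
  · exact ⟨0, isZiminImage_zero_iff.mpr rfl⟩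
  · exact ⟨1, isZiminImage_one h⟩

lemma le_ziminType {k : ℕ} {w : List α} (h : IsZiminImage k w) : k ≤ ziminType w :=
  le_csSup (ziminSet_bdd w) h

lemma ziminType_spec (w : List α) : IsZiminImage (ziminType w) w :=
  Nat.sSup_mem (ziminSet_nonempty w) (ziminSet_bdd w)

lemma ziminType_nil : ziminType ([] : List α) = 0 := by
  have := (ziminType_spec ([] : List α)).length_le
  simpa using this

lemma one_le_ziminType {w : List α} (h : w ≠ []) : 1 ≤ ziminType w :=
  le_ziminType (isZiminImage_one h)

lemma isZiminImage_succ_iff {k : ℕ} {w : List α} :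
    IsZiminImage (k + 1) w ↔ ∃ u t : List α, IsZiminImage k u ∧ t ≠ [] ∧ w = u ++ (t ++ u) := by
  constructor
  · rintro ⟨f, hf, rfl⟩
    exact ⟨(ziminWord k).flatMap f, f k, ⟨f, hf, rfl⟩, hf k, by
      simp [ziminWord, List.flatMap_append]⟩
  · rintro ⟨u, t, ⟨f, hf, rfl⟩, ht, rfl⟩
    refine ⟨fun i => if i = k then t else f i, fun i => ?_, ?_⟩
    · by_cases hik : i = k <;> simp [hik, ht, hf i]
    · have hcong : (ziminWord k).flatMap (fun i => if i = k then t else f i)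
          = (ziminWord k).flatMap f := by
        apply List.flatMap_congr
        intro x hx
        have := ziminWord_lt k x hx
        simp [Nat.ne_of_lt this]
      simp [ziminWord, List.flatMap_append, hcong]

lemma shortBordLen_mem {w : List α} (hw : w ≠ []) :
    w.take (shortBordLen w) <:+ w ∧ 2 * shortBordLen w < w.length := by
  have hne : {j | w.take j <:+ w ∧ 2 * j < w.length}.Nonempty :=
    ⟨0, by simpa using List.length_pos_iff.mpr hw⟩
  have hbdd : BddAbove {j | w.take j <:+ w ∧ 2 * j < w.length} :=
    ⟨w.length, fun j hj => by have := hj.2; omega⟩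
  exact Nat.sSup_mem hne hbdd

lemma le_shortBordLen {w : List α} {j : ℕ} (h1 : w.take j <:+ w) (h2 : 2 * j < w.length) :
    j ≤ shortBordLen w :=
  le_csSup ⟨w.length, fun j hj => by have := hj.2; omega⟩ ⟨h1, h2⟩

lemma shortBord_length {w : List α} (hw : w ≠ []) :
    (shortBord w).length = shortBordLen w := by
  have h := (shortBordLen_mem hw).2
  simp only [shortBord, List.length_take]
  omega

lemma shortBord_prefix (w : List α) : shortBord w <+: w := List.take_prefix _ _

lemma shortBord_suffix {w : List α} (hw : w ≠ []) : shortBord w <:+ w :=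
  (shortBordLen_mem hw).1

/-- The master lemma: monotonicity of the Zimin type along borders, and the
recursion `ziminType w = ziminType (shortBord w) + 1`. -/
lemma zimin_master : ∀ (n : ℕ) (v : List α), v.length ≤ n →
    ((v ≠ [] → ziminType v = ziminType (shortBord v) + 1) ∧
      (∀ u, u <+: v → u <:+ v → ziminType u ≤ ziminType v)) := by
  intro n
  induction n with
  | zero =>
    intro v hv
    have hv0 : v = [] := List.length_eq_zero_iff.mp (Nat.le_zero.mp hv)
    subst hv0
    refine ⟨fun h => absurd rfl h, fun u hu _ => ?_⟩
    have : u = [] := List.prefix_nil.mp hu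
    simp [this]
  | succ n ih =>
    intro v hv
    rcases eq_or_ne v [] with rfl | hvne
    · refine ⟨fun h => absurd rfl h, fun u hu _ => ?_⟩
      have : u = [] := List.prefix_nil.mp hu
      simp [this]
    -- basic facts about s = shortBord v
    have hvpos : 0 < v.length := List.length_pos_iff.mpr hvne
    set s := shortBord v with hs
    have hssuf : s <:+ v := shortBord_suffix hvne
    have hspre : s <+: v := shortBord_prefix v
    have hslen : (s).length = shortBordLen v := shortBord_length hvne
    have hs2 : 2 * s.length < v.length := by
      rw [hslen]; exact (shortBordLen_mem hvne).2
    have hsn : s.length ≤ n := by omega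
    -- decomposition v = s ++ t ++ s with t ≠ []
    obtain ⟨a, ha⟩ := shortBord_suffix hvne
    rw [← hs] at ha
    have halen : s.length ≤ a.length := by
      have := congrArg List.length ha
      simp only [List.length_append] at this
      omega
    have hapre : a <+: v := ⟨s, ha⟩
    have hsa : s <+: a := List.prefix_of_prefix_length_le hspre hapre halen
    obtain ⟨t, ht⟩ := hsa
    have hvst : v = s ++ (t ++ s) := by rw [← ha, ← ht]; simp
    have htne : t ≠ [] := by
      intro h
      rw [h] at hvst
      have := congrArg List.length hvst
      simp only [List.length_append, List.nil_append] at this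
      omega
    -- the recursion for v
    have hrec : ziminType v = ziminType s + 1 := by
      apply Nat.le_antisymm
      · apply csSup_le (ziminSet_nonempty v)
        intro k hk
        match k with
        | 0 =>
          exact absurd (isZiminImage_zero_iff.mp hk) hvne
        | k + 1 =>
          obtain ⟨u, t', himg, ht', heq⟩ := isZiminImage_succ_iff.mp hk
          have hupre : u <+: v := ⟨t' ++ u, heq.symm⟩
          have husuf : u <:+ v := ⟨u ++ t', by rw [heq]; simp⟩
          have hulen : 2 * u.length < v.length := by
            have hl1 := congrArg List.length heq
            simp only [List.length_append] at hl1
            have hl2 : 1 ≤ t'.length := List.length_pos_iff.mpr ht'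
            omega
          have hutake : v.take u.length = u := (List.prefix_iff_eq_take.mp hupre).symm
          have hule : u.length ≤ s.length := by
            rw [hslen]
            exact le_shortBordLen (by rw [hutake]; exact husuf) hulen
          have hus : u <+: s := List.prefix_of_prefix_length_le hupre hspre hule
          have hus' : u <:+ s := List.suffix_of_suffix_length_le husuf hssuf hule
          have := (ih s hsn).2 u hus hus'
          have hku : k ≤ ziminType u := le_ziminType himg
          omega
      · apply le_ziminType
        exact isZiminImage_succ_iff.mpr ⟨s, t, ziminType_spec s, htne, hvst⟩
    refine ⟨fun _ => hrec, ?_⟩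
    -- monotonicity
    intro u hupre husuf
    rcases eq_or_ne u v with rfl | huv
    · exact le_refl _
    have hul : u.length < v.length := by
      rcases Nat.lt_or_ge u.length v.length with h | h
      · exact h
      · exact absurd (List.prefix_iff_eq_take.mp hupre ▸ by
          rw [List.take_of_length_le h]) huv
    by_cases h2 : 2 * u.length < v.length
    · -- u is a short border of v: v = u ++ t' ++ u
      obtain ⟨a', ha'⟩ := husuf
      have halen' : u.length ≤ a'.length := by
        have := congrArg List.length ha'
        simp only [List.length_append] at this
        omega
      have hua : u <+: a' := List.prefix_of_prefix_length_le hupre ⟨u, ha'⟩ halen'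
      obtain ⟨t', ht'⟩ := hua
      have hvut : v = u ++ (t' ++ u) := by rw [← ha', ← ht']; simp
      have htne' : t' ≠ [] := by
        intro h
        rw [h] at hvut
        have := congrArg List.length hvut
        simp only [List.length_append, List.nil_append] at this
        omega
      have : IsZiminImage (ziminType u + 1) v :=
        isZiminImage_succ_iff.mpr ⟨u, t', ziminType_spec u, htne', hvut⟩
      have := le_ziminType this
      omega
    · -- long border: compare shortBord u with shortBord v
      push_neg at h2
      have hune : u ≠ [] := by
        intro h
        rw [h] at h2
        simp only [List.length_nil, Nat.mul_zero, Nat.le_zero] at h2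
        omega
      have hurec : ziminType u = ziminType (shortBord u) + 1 :=
        (ih u (by omega)).1 hune
      set s' := shortBord u with hs'
      have hs'suf : s' <:+ u := shortBord_suffix hune
      have hs'pre : s' <+: u := shortBord_prefix u
      have hs'len : s'.length = shortBordLen u := shortBord_length hune
      have hs'2 : 2 * s'.length < u.length := by
        rw [hs'len]; exact (shortBordLen_mem hune).2
      have hs'prev : s' <+: v := hs'pre.trans hupre
      have hs'sufv : s' <:+ v := hs'suf.trans husuf
      have hs'take : v.take s'.length = s' := (List.prefix_iff_eq_take.mp hs'prev).symm
      have hs'le : s'.length ≤ s.length := by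
        rw [hslen]
        exact le_shortBordLen (by rw [hs'take]; exact hs'sufv) (by omega)
      have h1 : s' <+: s := List.prefix_of_prefix_length_le hs'prev hspre hs'le
      have h2' : s' <:+ s := List.suffix_of_suffix_length_le hs'sufv hssuf hs'le
      have := (ih s hsn).2 s' h1 h2'
      omega

lemma ziminType_eq_succ {v : List α} (hv : v ≠ []) :
    ziminType v = ziminType (shortBord v) + 1 :=
  (zimin_master v.length v le_rfl).1 hv

end ZiminTheory

section FibBasics

lemma fibWord_ne_nil : ∀ n, fibWord n ≠ []
  | 0 => by simp [fibWord]
  | 1 => by simp [fibWord]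
  | n + 2 => by simp [fibWord, fibWord_ne_nil (n+1)]

lemma Phi_zero : Phi 0 = 1 := rfl
lemma Phi_one : Phi 1 = 2 := rfl
lemma Phi_add_two (n : ℕ) : Phi (n + 2) = Phi (n + 1) + Phi n := by
  simp [Phi, fibWord]

lemma Phi_pos (n : ℕ) : 0 < Phi n :=
  List.length_pos_iff.mpr (fibWord_ne_nil n)

lemma Phi_strictMono : StrictMono Phi := by
  apply strictMono_nat_of_lt_succ
  intro n
  cases n with
  | zero => norm_num [Phi_zero, Phi_one]
  | succ n => rw [Phi_add_two]; have := Phi_pos n; omega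

lemma Phi_mono : Monotone Phi := Phi_strictMono.monotone

lemma Phi_succ_sub (s : ℕ) : Phi (s + 1) = Phi s + Phi (s - 1) := by
  cases s with
  | zero => rfl
  | succ s => rw [Phi_add_two]; rfl

lemma lt_Phi_self (n : ℕ) : n < Phi n := by
  induction n with
  | zero => norm_num [Phi_zero]
  | succ n ih =>
    have h2 : Phi n < Phi (n + 1) := Phi_strictMono (by omega)
    omega

lemma two_le_Phi_succ (n : ℕ) : 2 ≤ Phi (n + 1) := by
  have := Phi_mono (Nat.succ_le_succ (Nat.zero_le n)); simpa [Phi_one] using this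

lemma fibWord_prefix : ∀ n, fibWord n <+: fibWord (n + 1)
  | 0 => ⟨[true], rfl⟩
  | n + 1 => by
    show fibWord (n+1) <+: fibWord (n+1) ++ fibWord n
    exact List.prefix_append _ _

lemma fibWord_prefix_le {m n : ℕ} (h : m ≤ n) : fibWord m <+: fibWord n := by
  induction h with
  | refl => exact List.prefix_rfl
  | step h ih => exact ih.trans (fibWord_prefix _)

lemma fibInf_eq {m i : ℕ} (h : i < Phi m) : fibInf i = (fibWord m)[i]'h := by
  unfold fibInf
  have h2 : i < Phi (i + 2) := (lt_Phi_self i).trans (Phi_strictMono (by omega))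
  rw [List.getD_eq_getElem _ _ h2]
  rcases Nat.le_total m (i + 2) with hm | hm
  · exact ((fibWord_prefix_le hm).getElem h).symm
  · exact (fibWord_prefix_le hm).getElem h2

lemma length_fibPrefix (n : ℕ) : (fibPrefix n).length = n := by simp [fibPrefix]

lemma fibPrefix_getElem {n i : ℕ} (h : i < n) :
    (fibPrefix n)[i]'(by simpa [length_fibPrefix] using h) = fibInf i := by
  simp [fibPrefix]

lemma fibPrefix_take {b n : ℕ} (h : b ≤ n) : (fibPrefix n).take b = fibPrefix b := by
  simp only [fibPrefix, ← List.map_take, List.take_range, Nat.min_eq_left h]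

lemma fibPrefix_ne_nil {n : ℕ} (h : 1 ≤ n) : fibPrefix n ≠ [] := by
  intro hc
  have := congrArg List.length hc
  simp [length_fibPrefix] at this
  omega

/-- Almost-commutation of consecutive Fibonacci words. -/
lemma fib_almost_comm : ∀ n, (fibWord n ++ fibWord (n+1)).take (Phi (n+2) - 2)
    = (fibWord (n+1) ++ fibWord n).take (Phi (n+2) - 2)
  | 0 => by decide
  | 1 => by decide
  | n + 2 => by
    have key := fib_almost_comm (n + 1)
    have h1 : fibWord (n+3) = fibWord (n+2) ++ fibWord (n+1) := rfl
    have h2 : Phi (n+4) - 2 = (fibWord (n+2)).length + (Phi (n+3) - 2) := by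
      have e1 : Phi (n+4) = Phi (n+3) + Phi (n+2) := Phi_add_two (n+2)
      have e2 : 2 ≤ Phi (n+3) := two_le_Phi_succ (n+2)
      show _ = Phi (n + 2) + _
      omega
    calc (fibWord (n+2) ++ fibWord (n+3)).take (Phi (n+4) - 2)
        = fibWord (n+2) ++ (fibWord (n+2) ++ fibWord (n+1)).take (Phi (n+3) - 2) := by
          rw [h1, h2, List.take_length_add_append]
      _ = fibWord (n+2) ++ (fibWord (n+1) ++ fibWord (n+2)).take (Phi (n+3) - 2) := by
          rw [key]
      _ = (fibWord (n+3) ++ fibWord (n+2)).take (Phi (n+4) - 2) := by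
          rw [h2]
          show _ = (fibWord (n+2) ++ fibWord (n+1) ++ fibWord (n+2)).take _
          rw [List.append_assoc, List.take_length_add_append]

/-- `Φ_j` is a period of a long enough prefix of the Fibonacci word. -/
lemma fib_period {j i : ℕ} (h : i + 3 ≤ Phi (j + 1)) : fibInf (i + Phi j) = fibInf i := by
  have hadd : Phi (j + 2) = Phi (j + 1) + Phi j := Phi_add_two j
  have hi1 : i < Phi (j + 1) := by omega
  have hx : i + Phi j < Phi (j + 2) - 2 := by omega
  have hxA : i + Phi j < (fibWord (j+1) ++ fibWord j).length := by
    simp only [List.length_append]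
    show _ < Phi (j+1) + Phi j
    omega
  have hxB : i + Phi j < (fibWord j ++ fibWord (j+1)).length := by
    simp only [List.length_append]
    show _ < Phi j + Phi (j+1)
    omega
  have h3 := congrArg (fun l => l[i + Phi j]?) (fib_almost_comm j)
  simp only [List.getElem?_take_of_lt hx] at h3
  rw [List.getElem?_eq_getElem hxB, List.getElem?_eq_getElem hxA] at h3
  have h4 := Option.some.inj h3
  have e1 : fibInf (i + Phi j) = (fibWord (j+1) ++ fibWord j)[i + Phi j]'hxA := by
    rw [fibInf_eq (show i + Phi j < Phi (j+2) by omega)]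
    congr 1
  have e3 : (fibWord j ++ fibWord (j+1))[i + Phi j]'hxB = (fibWord (j+1))[i]'hi1 := by
    have hle : (fibWord j).length ≤ i + Phi j := by show Phi j ≤ _; omega
    rw [List.getElem_append_right hle]
    congr 1
    show i + Phi j - Phi j = i
    omega
  rw [e1, ← h4, e3, fibInf_eq hi1]

/-- The letter just before the end of `F_t` alternates with the parity of `t`. -/
lemma fib_last_two : ∀ t, fibInf (Phi (t + 1) - 2) = decide ((t + 1) % 2 = 0)
  | 0 => by decide
  | 1 => by decide
  | t + 2 => by
    have ih := fib_last_two t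
    have e1 : Phi (t + 3) = Phi (t + 2) + Phi (t + 1) := Phi_add_two (t + 1)
    have e2 : 2 ≤ Phi (t + 1) := two_le_Phi_succ t
    have h1 : Phi (t + 2 + 1) - 2 = Phi (t + 1) - 2 + Phi (t + 2) := by
      show Phi (t + 3) - 2 = _
      omega
    have h2 : Phi (t + 1) - 2 + 3 ≤ Phi (t + 2 + 1) := by
      have h3 : Phi (t + 1) < Phi (t + 2 + 1) := Phi_strictMono (by omega)
      omega
    rw [h1, fib_period (j := t + 2) h2, ih]
    have : (t + 2 + 1) % 2 = (t + 1) % 2 := by omega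
    rw [this]

lemma fib_mismatch (t : ℕ) : fibInf (Phi (t + 2) - 2) ≠ fibInf (Phi (t + 1) - 2) := by
  rw [fib_last_two (t+1), fib_last_two t]
  have : (t + 2) % 2 ≠ (t + 1) % 2 := by omega
  simp only [ne_eq, decide_eq_decide]
  omega

end FibBasics

section FibRep

/-- Validity of a Fibonacci representation: no two adjacent ones. -/
abbrev FibChain (t : List Bool) : Prop := t.Chain' (fun a b => ¬(a = true ∧ b = true))

lemma fibVal_cons_true (r : List Bool) : fibVal (true :: r) = Phi r.length + fibVal r := by
  show (if true then Phi r.length else 0) + fibVal r = _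
  simp

lemma fibVal_cons_false (r : List Bool) : fibVal (false :: r) = fibVal r := by
  show (if false then Phi r.length else 0) + fibVal r = _
  simp

lemma two_mul_Phi_le (n : ℕ) : 2 * Phi n ≤ Phi (n + 2) := by
  have h1 := Phi_add_two n
  have h2 : Phi n ≤ Phi (n + 1) := Phi_mono (by omega)
  omega

lemma Phi_succ_le_two_mul (n : ℕ) : Phi (n + 1) ≤ 2 * Phi n := by
  cases n with
  | zero => simp [Phi_zero, Phi_one]
  | succ n =>
    have h1 : Phi (n + 1 + 1) = Phi (n + 1) + Phi n := Phi_add_two n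
    have h2 : Phi n ≤ Phi (n + 1) := Phi_mono (by omega)
    omega

lemma eq_false_of_chain {e : Bool} {r : List Bool} (h : FibChain (true :: e :: r)) :
    e = false := by
  have h2 := (List.isChain_cons_cons.mp h).1
  by_contra hc
  exact h2 ⟨rfl, by simpa using hc⟩

lemma fibVal_lt : ∀ (t : List Bool), FibChain t → fibVal t < Phi t.length
  | [], _ => by simp [fibVal, Phi_zero]
  | [d], _ => by
    cases d
    · rw [fibVal_cons_false]
      simp [fibVal, Phi_one]
    · rw [fibVal_cons_true]
      simp [fibVal, Phi_zero, Phi_one]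
  | d :: e :: r, h => by
    have h1 : FibChain (e :: r) := h.tail
    have ih := fibVal_lt (e :: r) h1
    cases d with
    | false =>
      rw [fibVal_cons_false]
      calc fibVal (e :: r) < Phi (e :: r).length := ih
        _ ≤ Phi (e :: r).length.succ := Phi_mono (by omega)
    | true =>
      have he : e = false := eq_false_of_chain h
      subst he
      have ih2 := fibVal_lt r h1.tail
      rw [fibVal_cons_true, fibVal_cons_false]
      have hadd : Phi (r.length + 1 + 1) = Phi (r.length + 1) + Phi r.length :=
        Phi_add_two r.length
      show Phi ((false :: r).length) + fibVal r < Phi (r.length + 1 + 1)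
      simp only [List.length_cons]
      omega

/-- Index (weight) of the lowest one in a representation. -/
def lowIdx : List Bool → Option ℕ
  | [] => none
  | d :: r =>
    match lowIdx r with
    | some s => some s
    | none => if d then some r.length else none

lemma lowIdx_cons_of_some {r : List Bool} {s : ℕ} (d : Bool) (h : lowIdx r = some s) :
    lowIdx (d :: r) = some s := by
  conv_lhs => unfold lowIdx
  rw [h]

lemma lowIdx_cons_false (r : List Bool) : lowIdx (false :: r) = lowIdx r := by
  conv_lhs => unfold lowIdx
  cases h : lowIdx r <;> simp

lemma lowIdx_cons_true_none {r : List Bool} (h : lowIdx r = none) :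
    lowIdx (true :: r) = some r.length := by
  conv_lhs => unfold lowIdx
  rw [h]
  simp

lemma fibVal_eq_zero_of_lowIdx_none : ∀ t : List Bool, lowIdx t = none → fibVal t = 0
  | [], _ => rfl
  | d :: r, h => by
    cases hr : lowIdx r with
    | some s => rw [lowIdx_cons_of_some d hr] at h; simp at h
    | none =>
      cases d with
      | true => rw [lowIdx_cons_true_none hr] at h; simp at h
      | false =>
        rw [fibVal_cons_false]
        exact fibVal_eq_zero_of_lowIdx_none r hr

lemma lowIdx_lt_length : ∀ (t : List Bool) (s : ℕ), lowIdx t = some s → s < t.length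
  | [], s, h => by simp [lowIdx] at h
  | d :: r, s, h => by
    cases hr : lowIdx r with
    | some s' =>
      rw [lowIdx_cons_of_some d hr] at h
      injection h with h
      subst h
      have := lowIdx_lt_length r s' hr
      simp only [List.length_cons]
      omega
    | none =>
      cases d with
      | false => rw [lowIdx_cons_false, hr] at h; simp at h
      | true =>
        rw [lowIdx_cons_true_none hr] at h
        injection h with h
        simp only [List.length_cons]
        omega

lemma fibVal_pos_of_lowIdx : ∀ (t : List Bool) (s : ℕ), lowIdx t = some s → 1 ≤ fibVal t
  | [], s, h => by simp [lowIdx] at h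
  | d :: r, s, h => by
    cases hr : lowIdx r with
    | some s' =>
      have ih := fibVal_pos_of_lowIdx r s' hr
      cases d
      · rw [fibVal_cons_false]; omega
      · rw [fibVal_cons_true]; omega
    | none =>
      cases d with
      | false => rw [lowIdx_cons_false, hr] at h; simp at h
      | true =>
        rw [fibVal_cons_true]
        have := Phi_pos r.length
        omega

lemma lowIdx_of_pos (t : List Bool) (h : 1 ≤ fibVal t) : ∃ s, lowIdx t = some s := by
  cases hl : lowIdx t with
  | some s => exact ⟨s, rfl⟩
  | none =>
    have := fibVal_eq_zero_of_lowIdx_none t hl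
    omega

lemma fibVal_low_bound : ∀ (t : List Bool) (s : ℕ), FibChain t → lowIdx t = some s →
    fibVal t + Phi (s - 1) ≤ Phi t.length
  | [], s, _, h => by simp [lowIdx] at h
  | [d], s, _, h => by
    cases d with
    | false => rw [lowIdx_cons_false] at h; simp [lowIdx] at h
    | true =>
      rw [lowIdx_cons_true_none (by simp [lowIdx])] at h
      injection h with h
      subst h
      decide
  | d :: e :: r', s, hc, h => by
    cases d with
    | false =>
      rw [lowIdx_cons_false] at h
      have ih := fibVal_low_bound (e :: r') s hc.tail h
      rw [fibVal_cons_false]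
      have hm : Phi (e :: r').length ≤ Phi ((e :: r').length + 1) := Phi_mono (by omega)
      simp only [List.length_cons] at *
      omega
    | true =>
      have he : e = false := eq_false_of_chain hc
      subst he
      cases hr : lowIdx r' with
      | none =>
        have h2 : lowIdx (true :: false :: r') = some (r'.length + 1) := by
          have hn : lowIdx (false :: r') = none := by rw [lowIdx_cons_false, hr]
          rw [lowIdx_cons_true_none hn]
          simp
        rw [h2] at h
        injection h with h
        subst h
        have hz := fibVal_eq_zero_of_lowIdx_none r' hr
        rw [fibVal_cons_true, fibVal_cons_false, hz]
        simp only [List.length_cons, Nat.add_sub_cancel, Nat.add_zero]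
        have hadd : Phi (r'.length + 1 + 1) = Phi (r'.length + 1) + Phi r'.length :=
          Phi_add_two r'.length
        omega
      | some s' =>
        have h2 : lowIdx (true :: false :: r') = some s' := by
          apply lowIdx_cons_of_some
          rw [lowIdx_cons_false, hr]
        rw [h2] at h
        injection h with h
        subst h
        have ih := fibVal_low_bound r' s' hc.tail.tail hr
        rw [fibVal_cons_true, fibVal_cons_false]
        simp only [List.length_cons]
        have hadd : Phi (r'.length + 1 + 1) = Phi (r'.length + 1) + Phi r'.length :=
          Phi_add_two r'.length
        omega

lemma fib_E : ∀ (t : List Bool) (s : ℕ), FibChain t → lowIdx t = some s →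
    fibInf (fibVal t + Phi (s + 1) - 2) ≠ fibInf (Phi (s + 1) - 2)
  | [], s, _, h => by simp [lowIdx] at h
  | [d], s, _, h => by
    cases d with
    | false => rw [lowIdx_cons_false] at h; simp [lowIdx] at h
    | true =>
      rw [lowIdx_cons_true_none (by simp [lowIdx])] at h
      injection h with h
      subst h
      decide
  | d :: e :: r', s, hc, h => by
    cases d with
    | false =>
      rw [lowIdx_cons_false] at h
      have ih := fib_E (e :: r') s hc.tail h
      rw [fibVal_cons_false]
      exact ih
    | true =>
      have he : e = false := eq_false_of_chain hc
      subst he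
      cases hr : lowIdx r' with
      | none =>
        have h2 : lowIdx (true :: false :: r') = some (r'.length + 1) := by
          have hn : lowIdx (false :: r') = none := by rw [lowIdx_cons_false, hr]
          rw [lowIdx_cons_true_none hn]
          simp
        rw [h2] at h
        injection h with h
        subst h
        have hz := fibVal_eq_zero_of_lowIdx_none r' hr
        rw [fibVal_cons_true, fibVal_cons_false, hz]
        simp only [List.length_cons, Nat.add_zero]
        have hadd : Phi (r'.length + 1) + Phi (r'.length + 1 + 1) = Phi (r'.length + 1 + 2) := by
          have := Phi_add_two (r'.length + 1)
          omega
        rw [hadd]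
        exact fib_mismatch (r'.length + 1)
      | some s' =>
        have h2 : lowIdx (true :: false :: r') = some s' := by
          apply lowIdx_cons_of_some
          rw [lowIdx_cons_false, hr]
        rw [h2] at h
        injection h with h
        subst h
        have ih := fib_E r' s' hc.tail.tail hr
        have hq1 : 1 ≤ fibVal r' := fibVal_pos_of_lowIdx r' s' hr
        have hq2 : fibVal r' < Phi r'.length := fibVal_lt r' hc.tail.tail
        have hslt : s' < r'.length := lowIdx_lt_length r' s' hr
        have hP2 : 2 ≤ Phi (s' + 1) := two_le_Phi_succ s'
        have hPmono : Phi (s' + 1) ≤ Phi r'.length := Phi_mono (by omega)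
        have hval : fibVal (true :: false :: r') = Phi (r'.length + 1) + fibVal r' := by
          rw [fibVal_cons_true, fibVal_cons_false]
          simp
        have hper : fibInf ((fibVal r' + Phi (s' + 1) - 2) + Phi (r'.length + 1))
            = fibInf (fibVal r' + Phi (s' + 1) - 2) := by
          apply fib_period
          have h2m := two_mul_Phi_le r'.length
          show _ + 3 ≤ Phi (r'.length + 1 + 1)
          have : Phi (r'.length + 1 + 1) = Phi (r'.length + 2) := rfl
          omega
        have harith : fibVal (true :: false :: r') + Phi (s' + 1) - 2
            = (fibVal r' + Phi (s' + 1) - 2) + Phi (r'.length + 1) := by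
          rw [hval]
          omega
        rw [harith, hper]
        exact ih

/-- Greedy Fibonacci representation of a number below `Phi L`, with `L` digits. -/
def zrep : ℕ → ℕ → List Bool
  | 0, _ => []
  | L + 1, q => if Phi L ≤ q then true :: zrep L (q - Phi L) else false :: zrep L q

lemma zrep_length : ∀ L q, (zrep L q).length = L
  | 0, _ => rfl
  | L + 1, q => by
    unfold zrep
    by_cases h : Phi L ≤ q <;> simp [h, zrep_length L]

lemma zrep_val : ∀ L q, q < Phi L → fibVal (zrep L q) = q
  | 0, q, h => by
    have : q = 0 := by rw [Phi_zero] at h; omega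
    simp [zrep, fibVal, this]
  | L + 1, q, h => by
    unfold zrep
    have h2m := Phi_succ_le_two_mul L
    by_cases hq : Phi L ≤ q
    · have hlt : q - Phi L < Phi L := by omega
      rw [if_pos hq, fibVal_cons_true, zrep_length, zrep_val L (q - Phi L) hlt]
      omega
    · rw [if_neg hq, fibVal_cons_false, zrep_val L q (by omega)]

lemma zrep_chain' : ∀ L q, q < Phi L → FibChain (zrep L q)
  | 0, _, _ => by simp [zrep]; exact List.isChain_nil
  | L + 1, q, h => by
    unfold zrep
    have h2m' := Phi_succ_le_two_mul L
    by_cases hq : Phi L ≤ q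
    · rw [if_pos hq]
      apply List.isChain_cons.mpr
      refine ⟨?_, zrep_chain' L (q - Phi L) (by omega)⟩
      intro b hb
      cases L with
      | zero => simp [zrep] at hb
      | succ L' =>
        have h1 : Phi (L' + 1 + 1) = Phi (L' + 1) + Phi L' := Phi_add_two L'
        have hlt2 : ¬ (Phi L' ≤ q - Phi (L' + 1)) := by omega
        unfold zrep at hb
        rw [if_neg hlt2] at hb
        simp only [List.head?_cons, Option.mem_def, Option.some.injEq] at hb
        subst hb
        simp
    · rw [if_neg hq]
      apply List.isChain_cons.mpr
      refine ⟨?_, zrep_chain' L q (by omega)⟩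
      intro b _
      simp

/-- Key non-periodicity bound: for `p = Φ_{M+1} + q'` with `1 ≤ q' < Φ_M`,
there is a mismatch position `x` with `q' + x + 2 ≤ Φ_{M+1}` showing that
`p` is not a period of a sufficiently long Fibonacci prefix. -/
lemma key_nonperiod (M q' : ℕ) (h1 : 1 ≤ q') (h2 : q' < Phi M) :
    ∃ x, fibInf (Phi (M + 1) + q' + x) ≠ fibInf x ∧ q' + x + 2 ≤ Phi (M + 1) := by
  have hM1 : Phi M < Phi (M + 1) := Phi_strictMono (by omega)
  have hch : FibChain (zrep M q') := zrep_chain' M q' h2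
  have hval : fibVal (zrep M q') = q' := zrep_val M q' h2
  have hlen : (zrep M q').length = M := zrep_length M q'
  obtain ⟨s, hs⟩ := lowIdx_of_pos (zrep M q') (by omega)
  have hslt : s < M := hlen ▸ lowIdx_lt_length _ s hs
  have hch2 : FibChain (true :: false :: zrep M q') := by
    apply List.isChain_cons.mpr
    refine ⟨by intro b hb; simp at hb; subst hb; simp, ?_⟩
    apply List.isChain_cons.mpr
    exact ⟨by intro b _; simp, hch⟩
  have hlow2 : lowIdx (true :: false :: zrep M q') = some s := by
    apply lowIdx_cons_of_some
    rw [lowIdx_cons_false]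
    exact hs
  have hval2 : fibVal (true :: false :: zrep M q') = Phi (M + 1) + q' := by
    rw [fibVal_cons_true, fibVal_cons_false, hval]
    simp [hlen]
  have hE := fib_E _ s hch2 hlow2
  rw [hval2] at hE
  have hP2 : 2 ≤ Phi (s + 1) := two_le_Phi_succ s
  refine ⟨Phi (s + 1) - 2, ?_, ?_⟩
  · have harith : Phi (M + 1) + q' + (Phi (s + 1) - 2) = Phi (M + 1) + q' + Phi (s + 1) - 2 := by
      omega
    rw [harith]
    exact hE
  · have hN4 := fibVal_low_bound (zrep M q') s hch hs
    rw [hval, hlen] at hN4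
    have hPsucc : Phi (s + 1) = Phi s + Phi (s - 1) := Phi_succ_sub s
    have hPs : Phi s ≤ Phi (M - 1) := Phi_mono (by omega)
    have hMsub : Phi (M + 1) = Phi M + Phi (M - 1) := Phi_succ_sub M
    omega

end FibRep

section FibBorders

lemma fibPrefix_suffix_of_period {b n : ℕ} (hb : b ≤ n)
    (h : ∀ i, i < b → fibInf (i + (n - b)) = fibInf i) :
    (fibPrefix n).take b <:+ fibPrefix n := by
  rw [fibPrefix_take hb]
  refine ⟨fibPrefix (n - b), ?_⟩
  apply List.ext_getElem (by simp only [List.length_append, length_fibPrefix]; omega)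
  intro i h1 h2
  rw [length_fibPrefix] at h2
  by_cases hi : i < n - b
  · rw [List.getElem_append_left (by simpa [length_fibPrefix] using hi)]
    rw [fibPrefix_getElem hi, fibPrefix_getElem h2]
  · push_neg at hi
    rw [List.getElem_append_right (by simpa [length_fibPrefix] using hi)]
    have hib : i - (fibPrefix (n - b)).length < b := by
      simp only [length_fibPrefix]
      omega
    rw [fibPrefix_getElem hib, fibPrefix_getElem h2]
    have h3 := h (i - (n - b)) (by simp only [length_fibPrefix] at hib ⊢; omega)
    have h4 : i - (n - b) + (n - b) = i := by omega
    rw [h4] at h3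
    simp only [length_fibPrefix]
    exact h3.symm

lemma period_of_fibPrefix_suffix {b n : ℕ} (hb : b ≤ n)
    (h : (fibPrefix n).take b <:+ fibPrefix n) :
    ∀ i, i < b → fibInf (i + (n - b)) = fibInf i := by
  rw [fibPrefix_take hb] at h
  obtain ⟨a, ha⟩ := h
  have hal : a.length = n - b := by
    have := congrArg List.length ha
    simp only [List.length_append, length_fibPrefix] at this
    omega
  intro i hi
  have hlt : i + (n - b) < n := by omega
  have hlt2 : i + (n - b) < (a ++ fibPrefix b).length := by
    simp only [List.length_append, length_fibPrefix, hal]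
    omega
  have e1 : (a ++ fibPrefix b)[i + (n - b)]'hlt2
      = (fibPrefix n)[i + (n - b)]'(by simp only [length_fibPrefix]; omega) :=
    List.getElem_of_eq ha _
  rw [List.getElem_append_right (by omega : a.length ≤ i + (n - b))] at e1
  have hidx : i + (n - b) - a.length = i := by omega
  rw [fibPrefix_getElem hlt] at e1
  have e2 : (fibPrefix b)[i + (n - b) - a.length]'(by
      simp only [length_fibPrefix]; omega) = fibInf i := by
    rw [fibPrefix_getElem (by omega : i + (n - b) - a.length < b), hidx]
  rw [e2] at e1
  exact e1.symm

/-- Core computation of the longest short border of a Fibonacci prefix. -/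
lemma shortBordLen_core {P n n' : ℕ}
    (hnn' : n' + P = n)
    (hper : ∀ i, i < n' → fibInf (i + P) = fibInf i)
    (h2 : 2 * n' < n)
    (hrule : ∀ p', n < 2 * p' → p' < P → ∃ x, fibInf (p' + x) ≠ fibInf x ∧ p' + x < n) :
    shortBordLen (fibPrefix n) = n' := by
  have hn : 1 ≤ n := by omega
  have hne := fibPrefix_ne_nil hn
  apply Nat.le_antisymm
  · by_contra hlt
    push_neg at hlt
    have hmem := shortBordLen_mem hne
    have hb2 : 2 * shortBordLen (fibPrefix n) < n := by
      have := hmem.2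
      rwa [length_fibPrefix] at this
    set b := shortBordLen (fibPrefix n) with hbdef
    have hper' := period_of_fibPrefix_suffix (by omega : b ≤ n) hmem.1
    obtain ⟨x, hx1, hx2⟩ := hrule (n - b) (by omega) (by omega)
    have hxb : x < b := by omega
    have := hper' x hxb
    have hiden : x + (n - b) = (n - b) + x := by omega
    rw [hiden] at this
    exact hx1 this
  · apply le_shortBordLen
    · have : n - n' = P := by omega
      apply fibPrefix_suffix_of_period (by omega : n' ≤ n)
      rw [this]
      exact hper
    · rw [length_fibPrefix]
      omega

/-- The first block of the Fibonacci representation determines the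
longest short border of the corresponding Fibonacci prefix. -/
lemma shortBordLen_fibPrefix (x rest : List Bool)
    (hx : x = [false, false] ∨ x = [false, false, true] ∨ x = [false, true])
    (hrest : rest = [] ∨ ∃ r', rest = false :: r')
    (hchain : FibChain rest) :
    shortBordLen (fibPrefix (fibVal (true :: (x ++ rest)))) = fibVal (true :: rest) := by
  have hq : fibVal rest < Phi rest.length := fibVal_lt rest hchain
  have hn' : fibVal (true :: rest) = Phi rest.length + fibVal rest := fibVal_cons_true rest
  rcases hx with rfl | rfl | rfl
  · -- x = 00 : n = Φ_{L+2} + q, P = Φ_{L+1}, n' = Φ_L + q, q < Φ_{L-1}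
    have hq0 : fibVal rest < Phi (rest.length - 1) := by
      rcases hrest with rfl | ⟨r', rfl⟩
      · simpa [fibVal] using Phi_pos 0
      · have h1 : fibVal (false :: r') = fibVal r' := fibVal_cons_false r'
        have h2 : fibVal r' < Phi r'.length := fibVal_lt r' hchain.tail
        have h3 : (false :: r').length - 1 = r'.length := by simp
        rw [h1, h3]
        exact h2
    have hnval : fibVal (true :: ([false, false] ++ rest))
        = Phi (rest.length + 2) + fibVal rest := by
      show fibVal (true :: false :: false :: rest) = _
      rw [fibVal_cons_true, fibVal_cons_false, fibVal_cons_false]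
      have : (false :: false :: rest).length = rest.length + 2 := by
        simp only [List.length_cons]
      rw [this]
    rw [hnval, hn']
    have hA : Phi (rest.length + 2) = Phi (rest.length + 1) + Phi rest.length :=
      Phi_add_two rest.length
    have hA' : Phi (rest.length + 1) = Phi rest.length + Phi (rest.length - 1) :=
      Phi_succ_sub rest.length
    apply shortBordLen_core (P := Phi (rest.length + 1))
    · omega
    · intro i hi
      apply fib_period
      have hs1 : Phi (rest.length + 1) < Phi (rest.length + 1 + 1) :=
        Phi_strictMono (by omega)
      have hs2 : Phi (rest.length + 2) = Phi (rest.length + 1 + 1) := rfl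
      omega
    · omega
    · intro p' hp1 hp2
      rcases hrest with rfl | ⟨r', hr'⟩
      · -- rest = [] : no such p'
        exfalso
        simp only [List.length_nil, fibVal] at hp1 hp2
        have e1 : Phi (0 + 2) = 3 := by rw [Phi_add_two 0, Phi_one, Phi_zero]
        have e2 : Phi (0 + 1) = 2 := Phi_one
        omega
      · have hL : rest.length = r'.length + 1 := by rw [hr']; simp
        rw [hL] at hp1 hp2 ⊢
        have h2m := two_mul_Phi_le (r'.length + 1)
        have hq' : 1 ≤ p' - Phi (r'.length + 1) := by omega
        have hAA : Phi (r'.length + 1 + 1) = Phi (r'.length + 1) + Phi r'.length :=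
          Phi_add_two r'.length
        have hq'2 : p' - Phi (r'.length + 1) < Phi r'.length := by omega
        obtain ⟨xx, hxx1, hxx2⟩ :=
          key_nonperiod r'.length (p' - Phi (r'.length + 1)) hq' hq'2
        refine ⟨xx, ?_, ?_⟩
        · have he : Phi (r'.length + 1) + (p' - Phi (r'.length + 1)) = p' := by omega
          rwa [he] at hxx1
        · omega
  · -- x = 001 : n = Φ_{L+3} + Φ_L + q, P = Φ_{L+3}, n' = Φ_L + q
    have hnval : fibVal (true :: ([false, false, true] ++ rest))
        = Phi (rest.length + 3) + (Phi rest.length + fibVal rest) := by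
      show fibVal (true :: false :: false :: true :: rest) = _
      rw [fibVal_cons_true, fibVal_cons_false, fibVal_cons_false, fibVal_cons_true]
      have : (false :: false :: true :: rest).length = rest.length + 3 := by
        simp only [List.length_cons]
      rw [this]
    rw [hnval, hn']
    have hA : Phi (rest.length + 2) = Phi (rest.length + 1) + Phi rest.length :=
      Phi_add_two rest.length
    have hB : Phi (rest.length + 3) = Phi (rest.length + 2) + Phi (rest.length + 1) :=
      Phi_add_two (rest.length + 1)
    have hm1 : Phi rest.length ≤ Phi (rest.length + 1) := Phi_mono (by omega)
    apply shortBordLen_core (P := Phi (rest.length + 3))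
    · omega
    · intro i hi
      apply fib_period
      have hs1 : Phi (rest.length + 3) < Phi (rest.length + 3 + 1) :=
        Phi_strictMono (by omega)
      omega
    · omega
    · intro p' hp1 hp2
      have hq' : 1 ≤ p' - Phi (rest.length + 2) := by omega
      have hq'2 : p' - Phi (rest.length + 2) < Phi (rest.length + 1) := by omega
      obtain ⟨xx, hxx1, hxx2⟩ :=
        key_nonperiod (rest.length + 1) (p' - Phi (rest.length + 2)) hq' hq'2
      refine ⟨xx, ?_, ?_⟩
      · have : Phi (rest.length + 1 + 1) + (p' - Phi (rest.length + 2)) = p' := by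
          have : Phi (rest.length + 1 + 1) = Phi (rest.length + 2) := rfl
          omega
        rwa [this] at hxx1
      · have : Phi (rest.length + 1 + 1) = Phi (rest.length + 2) := rfl
        omega
  · -- x = 01 : n = Φ_{L+2} + Φ_L + q, P = Φ_{L+2}, n' = Φ_L + q
    have hnval : fibVal (true :: ([false, true] ++ rest))
        = Phi (rest.length + 2) + (Phi rest.length + fibVal rest) := by
      show fibVal (true :: false :: true :: rest) = _
      rw [fibVal_cons_true, fibVal_cons_false, fibVal_cons_true]
      have : (false :: true :: rest).length = rest.length + 2 := by
        simp only [List.length_cons]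
      rw [this]
    rw [hnval, hn']
    have hA : Phi (rest.length + 2) = Phi (rest.length + 1) + Phi rest.length :=
      Phi_add_two rest.length
    have h2m := Phi_succ_le_two_mul rest.length
    have hm1 : Phi rest.length ≤ Phi (rest.length + 1) := Phi_mono (by omega)
    apply shortBordLen_core (P := Phi (rest.length + 2))
    · omega
    · intro i hi
      apply fib_period
      have hs1 : Phi (rest.length + 2) < Phi (rest.length + 2 + 1) :=
        Phi_strictMono (by omega)
      omega
    · omega
    · intro p' hp1 hp2
      have hq' : 1 ≤ p' - Phi (rest.length + 1) := by omega
      have hq'2 : p' - Phi (rest.length + 1) < Phi rest.length := by omega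
      obtain ⟨xx, hxx1, hxx2⟩ :=
        key_nonperiod rest.length (p' - Phi (rest.length + 1)) hq' hq'2
      refine ⟨xx, ?_, ?_⟩
      · have : Phi (rest.length + 1) + (p' - Phi (rest.length + 1)) = p' := by omega
        rwa [this] at hxx1
      · omega

lemma ziminType_fibPrefix_small {n : ℕ} (h1 : 1 ≤ n) (h2 : n ≤ 2) :
    ziminType (fibPrefix n) = 1 := by
  have hne := fibPrefix_ne_nil h1
  rw [ziminType_eq_succ hne]
  have hmem := (shortBordLen_mem hne).2
  rw [length_fibPrefix] at hmem
  have hz : shortBordLen (fibPrefix n) = 0 := by omega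
  simp [shortBord, hz, ziminType_nil]

lemma flatten_shape (ps : List (List Bool)) (z : List Bool)
    (hparts : ∀ p ∈ ps, p = [false, false] ∨ p = [false, false, true] ∨ p = [false, true])
    (hz : z = [] ∨ z = [false]) :
    ps.flatten ++ z = [] ∨ ∃ r', ps.flatten ++ z = false :: r' := by
  cases ps with
  | nil =>
    rcases hz with rfl | rfl
    · left; rfl
    · right; exact ⟨[], rfl⟩
  | cons p ps' =>
    right
    have hp := hparts p (List.mem_cons_self (a := p) (l := ps'))
    rcases hp with rfl | rfl | rfl <;> exact ⟨_, rfl⟩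

lemma main_aux : ∀ (parts : List (List Bool)) (z : List Bool),
    (∀ p ∈ parts, p = [false, false] ∨ p = [false, false, true] ∨ p = [false, true]) →
    (z = [] ∨ z = [false]) →
    FibChain (true :: (parts.flatten ++ z)) →
    ziminType (fibPrefix (fibVal (true :: (parts.flatten ++ z)))) = parts.length + 1
  | [], z, _, hz, _ => by
    rcases hz with rfl | rfl
    · have h1 : fibVal (true :: (List.flatten [] ++ ([] : List Bool))) = 1 := by decide
      rw [h1]
      exact ziminType_fibPrefix_small (by omega) (by omega)
    · have h1 : fibVal (true :: (List.flatten [] ++ [false])) = 2 := by decide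
      rw [h1]
      exact ziminType_fibPrefix_small (by omega) (by omega)
  | x :: ps, z, hparts, hz, hchain => by
    have hx := hparts x (List.mem_cons_self (a := x) (l := ps))
    have hflat : (x :: ps).flatten = x ++ ps.flatten := List.flatten_cons ..
    have hrest := flatten_shape ps z (fun p hp => hparts p (List.mem_cons_of_mem x hp)) hz
    have hfull : (x :: ps).flatten ++ z = x ++ (ps.flatten ++ z) := by
      rw [hflat, List.append_assoc]
    rw [hfull] at hchain ⊢
    have hchain_xr : FibChain (x ++ (ps.flatten ++ z)) := hchain.tail
    have hchain_rest : FibChain (ps.flatten ++ z) :=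
      hchain_xr.suffix ⟨x, rfl⟩
    have hchain' : FibChain (true :: (ps.flatten ++ z)) := by
      rcases hrest with he | ⟨r', he⟩
      · rw [he]; exact List.isChain_singleton _
      · rw [he]
        apply List.isChain_cons.mpr
        refine ⟨?_, he ▸ hchain_rest⟩
        intro b hb
        simp only [List.head?_cons, Option.mem_def, Option.some.injEq] at hb
        subst hb
        simp
    have hSB := shortBordLen_fibPrefix x (ps.flatten ++ z) hx hrest hchain_rest
    have hn1 : 1 ≤ fibVal (true :: (x ++ (ps.flatten ++ z))) := by
      rw [fibVal_cons_true]
      have := Phi_pos (x ++ (ps.flatten ++ z)).length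
      omega
    have hne := fibPrefix_ne_nil hn1
    rw [ziminType_eq_succ hne]
    have hb2 := (shortBordLen_mem hne).2
    rw [length_fibPrefix] at hb2
    have hsble : shortBordLen (fibPrefix (fibVal (true :: (x ++ (ps.flatten ++ z)))))
        ≤ fibVal (true :: (x ++ (ps.flatten ++ z))) := by omega
    have hshort : shortBord (fibPrefix (fibVal (true :: (x ++ (ps.flatten ++ z)))))
        = fibPrefix (fibVal (true :: (ps.flatten ++ z))) := by
      show (fibPrefix _).take _ = _
      rw [fibPrefix_take hsble, hSB]
    rw [hshort]
    have ih := main_aux ps z (fun p hp => hparts p (List.mem_cons_of_mem x hp)) hz hchain'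
    rw [ih]
    simp

end FibBorders

/-- Theorem 3: `ZFib[n] = ψ(n)`. If the Fibonacci representation `w` of `n ≥ 1`
factors as `w = 1 · x_1 ⋯ x_{k-1} · z` with each `x_i ∈ {00, 001, 01}` and `z`
empty or `0`, then the Zimin type of `F_∞[1..n]` equals `k`. -/
theorem ziminType_fibPrefix_eq_psi (n : ℕ) (hn : 1 ≤ n) (w : List Bool)
    (hw : IsFibRep n w) (k : ℕ) (hk : 1 ≤ k)
    (parts : List (List Bool)) (hlen : parts.length = k - 1)
    (hparts : ∀ p ∈ parts,
      p = [false, false] ∨ p = [false, false, true] ∨ p = [false, true])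
    (z : List Bool) (hz : z = [] ∨ z = [false])
    (hfact : w = true :: (parts.flatten ++ z)) :
    ziminType (fibPrefix n) = k := by
  obtain ⟨hhead, hchain, hval⟩ := hw
  subst hfact
  have haux := main_aux parts z hparts hz hchain
  rw [hval] at haux
  rw [haux]
  omega
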